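/- If J* ≥ 0, then for every ε > 0 there exists an ε-optimal nonrandomized Markov policy (i.e., a nonrandomized Markov policy π with J_π(x) ≤ J*(x) + ε for all x ∈ S); if in addition for every state x there exists a policy π with J_π(x) = J*(x), then there exists a nonrandomized stationary policy μ with J_μ = J*. -/

import Mathlib

/-!
Common framework: countable-state/countable-control total-cost MDPs under the
General Convergence (GC) condition, following H. Yu, "On Convergence of Value
Iteration for a Class of Total Cost Markov Decision Processes".

States `S` and controls `C` are countable types; `U x` is the nonempty set of
feasible controls at `x`; `g x u ∈ (-∞, +∞]` is the one-stage cost (an `EReal`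
that is never `⊥` on feasible pairs); `q x u x'` are transition probabilities.

A policy is represented by its conditional control distributions given the
(reversed) history of past (state, control) pairs and the current state.
Expectations are computed by explicit countable sums, splitting every
extended-real quantity into its positive and negative parts (computed in
`ℝ≥0∞`) and recombining with the convention `∞ - ∞ = ∞`.
-/

open scoped ENNReal Classical
open Filter

noncomputable section

namespace GCMDP

/-- The positive part of an extended real, as an element of `ℝ≥0∞`. -/
def ePos (a : EReal) : ℝ≥0∞ := if a = ⊤ then ⊤ else ENNReal.ofReal a.toReal

/-- Recombine a positive part `P` and a negative part `N` into an extended real,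
with the convention `∞ - ∞ = ∞`. -/
def signedSum (P N : ℝ≥0∞) : EReal := if P = ⊤ then ⊤ else (P : EReal) - (N : EReal)

variable {S C : Type}

/-- A (randomized, history-dependent) policy: to each reversed list of past
(state, control) pairs and each current state it assigns a mass function on
controls. -/
def Policy (S C : Type) : Type := List (S × C) → S → C → ℝ≥0∞

/-- A policy is valid for the control constraint `U` if each of its conditional
distributions is a probability distribution concentrated on the feasible set. -/
def IsPolicy (U : S → Set C) (π : Policy S C) : Prop :=
  ∀ (h : List (S × C)) (x : S), (∑' u : C, π h x u) = 1 ∧ ∀ u : C, π h x u ≠ 0 → u ∈ U x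

/-- A policy is nonrandomized if each of its conditional distributions is a
point mass. -/
def Nonrandomized (π : Policy S C) : Prop :=
  ∀ (h : List (S × C)) (x : S), ∃ u : C, ∀ u' : C, π h x u' = if u' = u then 1 else 0

/-- The initial state recorded in a reversed history `h` with current state `x`. -/
def initOf (h : List (S × C)) (x : S) : S := ((h.getLast?).map Prod.fst).getD x

/-- A policy is semi-Markov if its decision at time `k` depends on the history
only through the time `k`, the initial state and the current state. -/
def IsSemiMarkov (π : Policy S C) : Prop :=
  ∀ (h h' : List (S × C)) (x : S), h.length = h'.length → initOf h x = initOf h' x →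
    π h x = π h' x

/-- A policy is Markov if its decision at time `k` depends on the history only
through the time `k` and the current state. -/
def IsMarkov (π : Policy S C) : Prop :=
  ∀ (h h' : List (S × C)) (x : S), h.length = h'.length → π h x = π h' x

/-- A policy is stationary if its decision depends only on the current state. -/
def IsStationary (π : Policy S C) : Prop :=
  ∀ (h h' : List (S × C)) (x : S), π h x = π h' x

/-- The stationary policy determined by a one-step decision rule `μ`. -/
def toPolicy (μ : S → C → ℝ≥0∞) : Policy S C := fun _ x u => μ x u

/-- Probability that, starting from `x₀` and following policy `π`, the first
transitions produce the reversed history `h` and current state `y`. -/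
def histProb (q : S → C → S → ℝ≥0∞) (π : Policy S C) (x₀ : S) :
    List (S × C) → S → ℝ≥0∞
  | [], y => if y = x₀ then 1 else 0
  | (z, u) :: h, y => histProb q π x₀ h z * π h z u * q z u y

/-- Marginal distribution of the state `x_n` at time `n` under policy `π`
started at `x₀`. -/
def sDist (q : S → C → S → ℝ≥0∞) (π : Policy S C) (x₀ : S) (n : ℕ) (y : S) : ℝ≥0∞ :=
  ∑' h : {l : List (S × C) // l.length = n}, histProb q π x₀ h.1 y

/-- Joint distribution of the state-control pair `(x_n, u_n)` at time `n`. -/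
def saDist (q : S → C → S → ℝ≥0∞) (π : Policy S C) (x₀ : S) (n : ℕ) (y : S) (u : C) : ℝ≥0∞ :=
  ∑' h : {l : List (S × C) // l.length = n}, histProb q π x₀ h.1 y * π h.1 y u

/-- Expectation `E^π_{x₀}[f(x_n, u_n)]` of a nonnegative cost. -/
def costAt (q : S → C → S → ℝ≥0∞) (π : Policy S C) (x₀ : S) (n : ℕ)
    (f : S → C → ℝ≥0∞) : ℝ≥0∞ :=
  ∑' y : S, ∑' u : C, saDist q π x₀ n y u * f y u

/-- Positive part `g₊` of the one-stage cost. -/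
def gPos (g : S → C → EReal) (x : S) (u : C) : ℝ≥0∞ := ePos (g x u)

/-- Negative part `g₋` of the one-stage cost. -/
def gNeg (g : S → C → EReal) (x : S) (u : C) : ℝ≥0∞ := ePos (-(g x u))

/-- `J_π^+(x) = E^π_x[∑_k g₊(x_k,u_k)]`. -/
def Jplus (q : S → C → S → ℝ≥0∞) (g : S → C → EReal) (π : Policy S C) (x : S) : ℝ≥0∞ :=
  ∑' n : ℕ, costAt q π x n (gPos g)

/-- `J_π^-(x) = E^π_x[∑_k g₋(x_k,u_k)]`. -/
def Jminus (q : S → C → S → ℝ≥0∞) (g : S → C → EReal) (π : Policy S C) (x : S) : ℝ≥0∞ :=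
  ∑' n : ℕ, costAt q π x n (gNeg g)

/-- The total cost `J_π(x) = J_π^+(x) - J_π^-(x)` of a policy. -/
def Jpol (q : S → C → S → ℝ≥0∞) (g : S → C → EReal) (π : Policy S C) (x : S) : EReal :=
  signedSum (Jplus q g π x) (Jminus q g π x)

/-- The general convergence (GC) condition: `sup_π J_π^-(x) < ∞` for all `x`. -/
def GC (U : S → Set C) (q : S → C → S → ℝ≥0∞) (g : S → C → EReal) : Prop :=
  ∀ x : S, (⨆ π ∈ {π' : Policy S C | IsPolicy U π'}, Jminus q g π x) ≠ ⊤

/-- The optimal cost function `J*(x) = inf_π J_π(x)`. -/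
def Jstar (U : S → Set C) (q : S → C → S → ℝ≥0∞) (g : S → C → EReal) (x : S) : EReal :=
  ⨅ π ∈ {π' : Policy S C | IsPolicy U π'}, Jpol q g π x

/-- `J^{*+}(x) = inf_π J_π^+(x)`. -/
def JstarPlus (U : S → Set C) (q : S → C → S → ℝ≥0∞) (g : S → C → EReal) (x : S) : ℝ≥0∞ :=
  ⨅ π ∈ {π' : Policy S C | IsPolicy U π'}, Jplus q g π x

/-- `J^{*-}(x) = inf_π J_π^-(x)`. -/
def JstarMinus (U : S → Set C) (q : S → C → S → ℝ≥0∞) (g : S → C → EReal) (x : S) : ℝ≥0∞ :=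
  ⨅ π ∈ {π' : Policy S C | IsPolicy U π'}, Jminus q g π x

/-- The general one-stage dynamic programming operator with one-stage cost `c`:
`(opT c J)(x) = inf_{u ∈ U(x)} { c(x,u) + ∑_{x'} J(x') q(x'|x,u) }`, where the
bracket is evaluated by separating positive and negative parts, with the
convention `∞ - ∞ = ∞`. -/
def opT (U : S → Set C) (q : S → C → S → ℝ≥0∞) (c : S → C → EReal)
    (J : S → EReal) (x : S) : EReal :=
  ⨅ u ∈ U x,
    signedSum (ePos (c x u) + ∑' x' : S, q x u x' * ePos (J x'))
      (ePos (-(c x u)) + ∑' x' : S, q x u x' * ePos (-(J x')))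

/-- The dynamic programming operator `T` of the total cost problem. -/
def Top (U : S → Set C) (q : S → C → S → ℝ≥0∞) (g : S → C → EReal) :
    (S → EReal) → S → EReal :=
  opT U q g

/-- The operator `T₊` associated with the positive part `g₊` of the cost. -/
def TopPlus (U : S → Set C) (q : S → C → S → ℝ≥0∞) (g : S → C → EReal) :
    (S → EReal) → S → EReal :=
  opT U q (fun x u => max (g x u) 0)

/-- The operator `T₋` associated with the (negated) negative part `-g₋` of the cost. -/
def TopMinus (U : S → Set C) (q : S → C → S → ℝ≥0∞) (g : S → C → EReal) :
    (S → EReal) → S → EReal :=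
  opT U q (fun x u => min (g x u) 0)

/-- The cost-free operator `T₀`. -/
def TopZero (U : S → Set C) (q : S → C → S → ℝ≥0∞) :
    (S → EReal) → S → EReal :=
  opT U q (fun _ _ => 0)

/-- The monotone-increasing modification `T̃(J) = max{J, T(J)}` of `T`. -/
def Ttil (U : S → Set C) (q : S → C → S → ℝ≥0∞) (g : S → C → EReal)
    (J : S → EReal) (x : S) : EReal :=
  max (J x) (Top U q g J x)

/-- The operator `T_μ` associated with a stationary decision rule `μ`. -/
def Tmu (q : S → C → S → ℝ≥0∞) (g : S → C → EReal) (μ : S → C → ℝ≥0∞)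
    (J : S → EReal) (x : S) : EReal :=
  signedSum (∑' u : C, μ x u * (ePos (g x u) + ∑' x' : S, q x u x' * ePos (J x')))
    (∑' u : C, μ x u * (ePos (-(g x u)) + ∑' x' : S, q x u x' * ePos (-(J x'))))

/-- Expectation `E^π_{x₀}[J(x_n)]` of an extended-real function of the state at
time `n` (positive and negative parts combined with the convention `∞-∞=∞`). -/
def expState (q : S → C → S → ℝ≥0∞) (π : Policy S C) (x₀ : S) (n : ℕ)
    (J : S → EReal) : EReal :=
  signedSum (∑' y : S, sDist q π x₀ n y * ePos (J y))
    (∑' y : S, sDist q π x₀ n y * ePos (-(J y)))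

/-- The expected tail cost `E^π_{x₀}[∑_{k ≥ n} g(x_k, u_k)]`. -/
def tailCost (q : S → C → S → ℝ≥0∞) (g : S → C → EReal) (π : Policy S C)
    (x₀ : S) (n : ℕ) : EReal :=
  signedSum (∑' k : ℕ, costAt q π x₀ (n + k) (gPos g))
    (∑' k : ℕ, costAt q π x₀ (n + k) (gNeg g))

/-- Membership in the class `A₀(S)`: functions nowhere `-∞` such that
`inf_{n ≥ 1} T₀ⁿ(min{J, 0})` is nowhere `-∞`. -/
def MemA0 (U : S → Set C) (q : S → C → S → ℝ≥0∞) (J : S → EReal) : Prop :=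
  (∀ x : S, J x ≠ ⊥) ∧
    ∀ x : S, (⨅ n : ℕ, (TopZero U q)^[n + 1] (fun y => min (J y) 0) x) ≠ ⊥



/-! ### Auxiliary lemmas -/

section Aux

variable {S C : Type}

lemma ePos_top : ePos (⊤ : EReal) = ⊤ := by simp [ePos]

lemma ePos_eq_top_iff {a : EReal} : ePos a = ⊤ ↔ a = ⊤ := by
  unfold ePos; split <;> simp_all [ENNReal.ofReal_ne_top]

lemma ePos_nonpos {a : EReal} (h : a ≤ 0) : ePos a = 0 := by
  have ha : a ≠ ⊤ := by rintro rfl; simp at h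
  unfold ePos
  rw [if_neg ha, ENNReal.ofReal_eq_zero]
  rcases eq_or_ne a ⊥ with rfl | hb
  · simp
  · have := EReal.toReal_le_toReal h hb (by simp)
    simpa using this

lemma coe_ePos {a : EReal} (h0 : 0 ≤ a) (ht : a ≠ ⊤) : ((ePos a : ℝ≥0∞) : EReal) = a := by
  have hb : a ≠ ⊥ := fun h => by simp [h] at h0
  have htr : (0:ℝ) ≤ a.toReal := by
    have := EReal.toReal_le_toReal h0 (by simp) ht
    simpa using this
  unfold ePos
  rw [if_neg ht, EReal.coe_ennreal_ofReal, max_eq_left htr, EReal.coe_toReal ht hb]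

lemma ennreal_coe_eq {a : ℝ≥0∞} (h : a ≠ ⊤) : ((a : EReal)) = ((a.toReal : ℝ) : EReal) := by
  have h1 : (a : EReal) ≠ ⊤ := by simpa [EReal.coe_ennreal_eq_top_iff] using h
  rw [← EReal.coe_toReal h1 (EReal.coe_ennreal_ne_bot a), EReal.toReal_coe_ennreal]

/-- The shifted policy after a first state-control pair `(z, u)`. -/
def shift (π : Policy S C) (z : S) (u : C) : Policy S C := fun h => π (h ++ [(z, u)])

lemma isPolicy_shift {U : S → Set C} {π : Policy S C} (h : IsPolicy U π) (z : S) (u : C) :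
    IsPolicy U (shift π z u) := fun h' x => h (h' ++ [(z, u)]) x

lemma initOf_cons (a : S) (b : C) (t : List (S × C)) (y : S) :
    initOf ((a, b) :: t) y = initOf t a := by
  cases t with
  | nil => simp [initOf]
  | cons p t' =>
      simp only [initOf]
      rw [List.getLast?_eq_getLast (l := (a, b) :: p :: t') (by simp), List.getLast?_eq_getLast (l := p :: t') (by simp)]
      simp

lemma histProb_ne_zero {q : S → C → S → ℝ≥0∞} {π : Policy S C} {w : S} :
    ∀ {t : List (S × C)} {y : S}, histProb q π w t y ≠ 0 → initOf t y = w := by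
  intro t
  induction t with
  | nil => intro y h; simp only [histProb] at h; by_contra hne
           simp [initOf] at hne ⊢; exact h (if_neg hne)
  | cons p t ih =>
      rintro y h
      obtain ⟨a, b⟩ := p
      simp only [histProb] at h
      have h1 : histProb q π w t a ≠ 0 := fun h0 => h (by simp [h0])
      rw [initOf_cons]; exact ih h1

lemma histProb_concat (q : S → C → S → ℝ≥0∞) (π : Policy S C) (x₀ z : S) (u : C) :
    ∀ (l : List (S × C)) (y : S),
      histProb q π x₀ (l ++ [(z, u)]) y
        = (if z = x₀ then 1 else 0) * π [] z u *
            (q z u (initOf l y) * histProb q (shift π z u) (initOf l y) l y) := by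
  intro l
  induction l with
  | nil =>
      intro y
      simp only [List.nil_append, histProb, initOf]
      simp [histProb, mul_assoc]
  | cons p t ih =>
      rintro y
      obtain ⟨a, b⟩ := p
      have : ((a, b) :: t) ++ [(z, u)] = (a, b) :: (t ++ [(z, u)]) := rfl
      rw [this]
      simp only [histProb, initOf_cons]
      rw [ih a]
      have hsh : π (t ++ [(z, u)]) a b = shift π z u t a b := rfl
      rw [hsh]
      ring

/-- Lists of length `n+1` as a head together with a tail of length `n`. -/
def lenEquivCons (A : Type) (n : ℕ) :
    {l : List A // l.length = n + 1} ≃ A × {l : List A // l.length = n} where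
  toFun x := ⟨x.1.head (by have h2 := x.2; intro h; rw [h] at h2; simp at h2),
    ⟨x.1.tail, by simp [x.2]⟩⟩
  invFun p := ⟨p.1 :: p.2.1, by simp [p.2.2]⟩
  left_inv x := by
    apply Subtype.ext
    exact List.cons_head_tail _
  right_inv p := by simp

/-- Lists of length `n+1` as a last element together with an initial segment of length `n`. -/
def lenEquivConcat (A : Type) (n : ℕ) :
    {l : List A // l.length = n + 1} ≃ A × {l : List A // l.length = n} where
  toFun x := ⟨x.1.getLast (by intro h; exact absurd x.2 (by simp [h])),
    ⟨x.1.dropLast, by simp [x.2]⟩⟩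
  invFun p := ⟨p.2.1 ++ [p.1], by simp [p.2.2]⟩
  left_inv x := by
    apply Subtype.ext
    exact List.dropLast_append_getLast _
  right_inv p := by
    ext
    · simp [List.getLast_concat]
    · simp [List.dropLast_concat]

lemma tsum_len_succ_cons {n : ℕ} (f : List (S × C) → ℝ≥0∞) :
    ∑' l : {l : List (S × C) // l.length = n + 1}, f l.1
      = ∑' p : S × C, ∑' t : {l : List (S × C) // l.length = n}, f (p :: t.1) := by
  rw [← ((lenEquivCons (S × C) n).symm.tsum_eq (fun l => f l.1)), ENNReal.tsum_prod']
  rfl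

lemma tsum_len_succ_concat {n : ℕ} (f : List (S × C) → ℝ≥0∞) :
    ∑' l : {l : List (S × C) // l.length = n + 1}, f l.1
      = ∑' p : S × C, ∑' t : {l : List (S × C) // l.length = n}, f (t.1 ++ [p]) := by
  rw [← ((lenEquivConcat (S × C) n).symm.tsum_eq (fun l => f l.1)), ENNReal.tsum_prod']
  rfl

end Aux


section Decomp

variable {S C : Type}
variable {q : S → C → S → ℝ≥0∞} {π : Policy S C} {U : S → Set C} {g : S → C → EReal}

lemma tsum_len_zero (f : List (S × C) → ℝ≥0∞) :
    ∑' l : {l : List (S × C) // l.length = 0}, f l.1 = f [] := by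
  have : ∀ l : {l : List (S × C) // l.length = 0}, l = ⟨[], rfl⟩ := by
    rintro ⟨l, hl⟩
    apply Subtype.ext
    exact List.length_eq_zero_iff.mp hl
  rw [tsum_eq_single (⟨[], rfl⟩ : {l : List (S × C) // l.length = 0})]
  intro b hb; exact absurd (this b) hb

lemma sDist_zero (x y : S) : sDist q π x 0 y = if y = x then 1 else 0 := by
  unfold sDist
  rw [tsum_len_zero (fun l => histProb q π x l y)]
  rfl

lemma saDist_zero (x y : S) (u : C) :
    saDist q π x 0 y u = (if y = x then 1 else 0) * π [] y u := by
  unfold saDist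
  rw [tsum_len_zero (fun l => histProb q π x l y * π l y u)]
  rfl

lemma sDist_succ (x : S) (n : ℕ) (y : S) :
    sDist q π x (n + 1) y = ∑' p : S × C, saDist q π x n p.1 p.2 * q p.1 p.2 y := by
  unfold sDist
  rw [tsum_len_succ_cons (fun l => histProb q π x l y)]
  refine tsum_congr fun p => ?_
  obtain ⟨z, u⟩ := p
  unfold saDist
  rw [← ENNReal.tsum_mul_right]
  rfl

lemma tsum_saDist (hπ : IsPolicy U π) (x : S) (n : ℕ) (z : S) :
    ∑' u : C, saDist q π x n z u = sDist q π x n z := by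
  unfold saDist sDist
  rw [ENNReal.tsum_comm]
  refine tsum_congr fun h => ?_
  rw [ENNReal.tsum_mul_left, (hπ h.1 z).1, mul_one]

lemma saDist_ne_zero_mem (hπ : IsPolicy U π) {x : S} {n : ℕ} {z : S} {u : C}
    (h : saDist q π x n z u ≠ 0) : u ∈ U z := by
  by_contra hu
  apply h
  unfold saDist
  refine ENNReal.tsum_eq_zero.mpr fun l => ?_
  have : π l.1 z u = 0 := by
    by_contra h0
    exact hu ((hπ l.1 z).2 u h0)
  simp [this]

lemma sDist_mass_le (hq : ∀ x, ∀ u ∈ U x, (∑' x' : S, q x u x') = 1)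
    (hπ : IsPolicy U π) (x : S) : ∀ n, (∑' y : S, sDist q π x n y) ≤ 1 := by
  intro n
  induction n with
  | zero =>
      simp only [sDist_zero]
      rw [tsum_eq_single x (by intro b hb; exact if_neg hb)]
      simp
  | succ n ih =>
      calc ∑' y : S, sDist q π x (n + 1) y
          = ∑' y : S, ∑' p : S × C, saDist q π x n p.1 p.2 * q p.1 p.2 y := by
            exact tsum_congr fun y => sDist_succ x n y
        _ = ∑' p : S × C, saDist q π x n p.1 p.2 * ∑' y : S, q p.1 p.2 y := by
            rw [ENNReal.tsum_comm]
            exact tsum_congr fun p => ENNReal.tsum_mul_left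
        _ ≤ ∑' p : S × C, saDist q π x n p.1 p.2 := by
            refine Summable.tsum_le_tsum (fun p => ?_) ENNReal.summable ENNReal.summable
            rcases eq_or_ne (saDist q π x n p.1 p.2) 0 with h0 | h0
            · simp [h0]
            · rw [hq p.1 p.2 (saDist_ne_zero_mem hπ h0), mul_one]
        _ = ∑' z : S, ∑' u : C, saDist q π x n z u := ENNReal.tsum_prod'
        _ = ∑' z : S, sDist q π x n z := tsum_congr fun z => tsum_saDist hπ x n z
        _ ≤ 1 := ih

lemma q_histProb_collapse (σ : Policy S C) (z : S) (u : C) (t : List (S × C)) (y : S) :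
    q z u (initOf t y) * histProb q σ (initOf t y) t y
      = ∑' w : S, q z u w * histProb q σ w t y := by
  rw [tsum_eq_single (initOf t y)]
  intro w hw
  rcases eq_or_ne (histProb q σ w t y) 0 with h0 | h0
  · simp [h0]
  · exact absurd (histProb_ne_zero h0) (Ne.symm hw)

lemma costAt_zero (x : S) (c : S → C → ℝ≥0∞) :
    costAt q π x 0 c = ∑' u : C, π [] x u * c x u := by
  unfold costAt
  rw [tsum_eq_single x]
  · refine tsum_congr fun u => ?_
    rw [saDist_zero, if_pos rfl, one_mul]
  · intro y hy
    refine ENNReal.tsum_eq_zero.mpr fun u => ?_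
    rw [saDist_zero, if_neg hy, zero_mul, zero_mul]

lemma tsum_rot {α β γ : Type} (f : α → β → γ → ℝ≥0∞) :
    ∑' a : α, ∑' b : β, ∑' c : γ, f a b c = ∑' c : γ, ∑' a : α, ∑' b : β, f a b c := by
  calc ∑' a : α, ∑' b : β, ∑' c : γ, f a b c
      = ∑' a : α, ∑' c : γ, ∑' b : β, f a b c := tsum_congr fun a => ENNReal.tsum_comm
    _ = ∑' c : γ, ∑' a : α, ∑' b : β, f a b c := ENNReal.tsum_comm

lemma saDist_succ_shift (x : S) (n : ℕ) (y : S) (v : C) :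
    saDist q π x (n + 1) y v
      = ∑' u : C, π [] x u * ∑' w : S, q x u w * saDist q (shift π x u) w n y v := by
  have key : saDist q π x (n + 1) y v
      = ∑' z : S, ∑' u : C, (if z = x then 1 else 0) * (π [] z u *
          ∑' t : {l : List (S × C) // l.length = n},
            ∑' w : S, q z u w * histProb q (shift π z u) w t.1 y *
              shift π z u t.1 y v) := by
    unfold saDist
    rw [tsum_len_succ_concat (fun l => histProb q π x l y * π l y v),
      ENNReal.tsum_prod']
    refine tsum_congr fun z => tsum_congr fun u => ?_
    rw [← ENNReal.tsum_mul_left, ← ENNReal.tsum_mul_left]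
    refine tsum_congr fun t => ?_
    have h1 : π (t.1 ++ [(z, u)]) y v = shift π z u t.1 y v := rfl
    have h2 : ∑' w : S, q z u w * histProb q (shift π z u) w t.1 y * shift π z u t.1 y v
        = q z u (initOf t.1 y) * histProb q (shift π z u) (initOf t.1 y) t.1 y *
            shift π z u t.1 y v := by
      rw [q_histProb_collapse]
      exact ENNReal.tsum_mul_right
    rw [histProb_concat q π x z u t.1 y, h1, h2]
    ring
  rw [key, tsum_eq_single x ?hside]
  case hside =>
    intro z hz
    simp [if_neg hz]
  have hx : ∀ P : C → ℝ≥0∞, ∑' u : C, (if x = x then (1:ℝ≥0∞) else 0) * P u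
      = ∑' u : C, P u := by
    intro P
    refine tsum_congr fun u => ?_
    rw [if_pos rfl, one_mul]
  rw [hx]
  refine tsum_congr fun u => ?_
  congr 1
  rw [ENNReal.tsum_comm]
  refine tsum_congr fun w => ?_
  unfold saDist
  rw [← ENNReal.tsum_mul_left]
  refine tsum_congr fun t => ?_
  ring

lemma costAt_succ (x : S) (n : ℕ) (c : S → C → ℝ≥0∞) :
    costAt q π x (n + 1) c
      = ∑' u : C, π [] x u * ∑' w : S, q x u w * costAt q (shift π x u) w n c := by
  unfold costAt
  calc ∑' y : S, ∑' v : C, saDist q π x (n + 1) y v * c y v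
      = ∑' y : S, ∑' v : C, ∑' u : C, π [] x u *
          ∑' w : S, q x u w * (saDist q (shift π x u) w n y v * c y v) := by
        refine tsum_congr fun y => tsum_congr fun v => ?_
        rw [saDist_succ_shift, ← ENNReal.tsum_mul_right]
        refine tsum_congr fun u => ?_
        rw [mul_assoc]
        congr 1
        rw [← ENNReal.tsum_mul_right]
        refine tsum_congr fun w => ?_
        ring
    _ = ∑' u : C, ∑' y : S, ∑' v : C, π [] x u *
          ∑' w : S, q x u w * (saDist q (shift π x u) w n y v * c y v) :=
        tsum_rot _
    _ = ∑' u : C, π [] x u * ∑' y : S, ∑' v : C,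
          ∑' w : S, q x u w * (saDist q (shift π x u) w n y v * c y v) := by
        refine tsum_congr fun u => ?_
        simp only [ENNReal.tsum_mul_left]
    _ = ∑' u : C, π [] x u * ∑' w : S, ∑' y : S, ∑' v : C,
          q x u w * (saDist q (shift π x u) w n y v * c y v) := by
        refine tsum_congr fun u => ?_
        rw [tsum_rot (fun y v w => q x u w * (saDist q (shift π x u) w n y v * c y v))]
    _ = ∑' u : C, π [] x u * ∑' w : S, q x u w *
          ∑' y : S, ∑' v : C, saDist q (shift π x u) w n y v * c y v := by
        refine tsum_congr fun u => ?_
        congr 1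
        refine tsum_congr fun w => ?_
        simp only [ENNReal.tsum_mul_left]

end Decomp


section Jlemmas

variable {S C : Type}
variable {U : S → Set C} {q : S → C → S → ℝ≥0∞} {g : S → C → EReal} {π : Policy S C}

lemma tsum_costAt_decomp (c : S → C → ℝ≥0∞) (x : S) :
    ∑' n : ℕ, costAt q π x n c
      = ∑' u : C, π [] x u *
          (c x u + ∑' w : S, q x u w * ∑' n : ℕ, costAt q (shift π x u) w n c) := by
  rw [tsum_eq_zero_add' ENNReal.summable]
  calc costAt q π x 0 c + ∑' n : ℕ, costAt q π x (n + 1) c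
      = (∑' u : C, π [] x u * c x u) +
          ∑' u : C, π [] x u * ∑' w : S, q x u w * ∑' n : ℕ, costAt q (shift π x u) w n c := by
        rw [costAt_zero]
        congr 1
        calc ∑' n : ℕ, costAt q π x (n + 1) c
            = ∑' n : ℕ, ∑' u : C, π [] x u * ∑' w : S, q x u w * costAt q (shift π x u) w n c :=
              tsum_congr fun n => costAt_succ x n c
          _ = ∑' u : C, ∑' n : ℕ, π [] x u * ∑' w : S, q x u w * costAt q (shift π x u) w n c :=
              ENNReal.tsum_comm
          _ = ∑' u : C, π [] x u * ∑' n : ℕ, ∑' w : S, q x u w * costAt q (shift π x u) w n c := by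
              refine tsum_congr fun u => ?_; exact ENNReal.tsum_mul_left
          _ = ∑' u : C, π [] x u * ∑' w : S, ∑' n : ℕ, q x u w * costAt q (shift π x u) w n c := by
              refine tsum_congr fun u => ?_; congr 1; exact ENNReal.tsum_comm
          _ = ∑' u : C, π [] x u * ∑' w : S, q x u w * ∑' n : ℕ, costAt q (shift π x u) w n c := by
              refine tsum_congr fun u => ?_; congr 1
              refine tsum_congr fun w => ?_; exact ENNReal.tsum_mul_left
    _ = ∑' u : C, π [] x u *
          (c x u + ∑' w : S, q x u w * ∑' n : ℕ, costAt q (shift π x u) w n c) := by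
        rw [← ENNReal.tsum_add]
        exact tsum_congr fun u => (mul_add _ _ _).symm

lemma Jplus_decomp (x : S) :
    Jplus q g π x
      = ∑' u : C, π [] x u * (gPos g x u + ∑' w : S, q x u w * Jplus q g (shift π x u) w) :=
  tsum_costAt_decomp _ x

lemma Jminus_decomp (x : S) :
    Jminus q g π x
      = ∑' u : C, π [] x u * (gNeg g x u + ∑' w : S, q x u w * Jminus q g (shift π x u) w) :=
  tsum_costAt_decomp _ x

lemma Jminus_ne_top (hGC : GC U q g) (hπ : IsPolicy U π) (x : S) : Jminus q g π x ≠ ⊤ := by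
  intro h
  apply hGC x
  refine top_unique ?_
  rw [← h]
  exact le_iSup₂ (f := fun π' (_ : π' ∈ {π' : Policy S C | IsPolicy U π'}) => Jminus q g π' x) π hπ

lemma Jstar_le_Jpol (hπ : IsPolicy U π) (x : S) : Jstar U q g x ≤ Jpol q g π x :=
  iInf₂_le (f := fun π' (_ : π' ∈ {π' : Policy S C | IsPolicy U π'}) => Jpol q g π' x) π hπ

lemma gNeg_ne_top (hg : ∀ x, ∀ u ∈ U x, g x u ≠ ⊥) {x : S} {u : C} (hu : u ∈ U x) :
    gNeg g x u ≠ ⊤ := by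
  unfold gNeg
  rw [Ne, ePos_eq_top_iff, EReal.neg_eq_top_iff]
  exact hg x u hu

lemma Jplus_ge (hGC : GC U q g) (hpos : ∀ x, 0 ≤ Jstar U q g x) (hπ : IsPolicy U π) (w : S) :
    ePos (Jstar U q g w) + Jminus q g π w ≤ Jplus q g π w := by
  rcases eq_or_ne (Jplus q g π w) ⊤ with hJP | hJP
  · rw [hJP]; exact le_top
  have hJM : Jminus q g π w ≠ ⊤ := Jminus_ne_top hGC hπ w
  have hle : Jstar U q g w ≤ (Jplus q g π w : EReal) - (Jminus q g π w : EReal) := by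
    have := Jstar_le_Jpol (q := q) (g := g) hπ w
    rwa [Jpol, signedSum, if_neg hJP] at this
  have hsub : ((Jplus q g π w : EReal) - (Jminus q g π w : EReal))
      = (((Jplus q g π w).toReal - (Jminus q g π w).toReal : ℝ) : EReal) := by
    rw [ennreal_coe_eq hJP, ennreal_coe_eq hJM, ← EReal.coe_sub]
  have hstar_ne_top : Jstar U q g w ≠ ⊤ := by
    intro h
    rw [h, hsub] at hle
    exact (EReal.coe_ne_top _) (top_unique hle)
  have hstar_ne_bot : Jstar U q g w ≠ ⊥ := fun h => by simpa [h] using hpos w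
  rw [hsub, ← EReal.coe_toReal hstar_ne_top hstar_ne_bot, EReal.coe_le_coe_iff] at hle
  have hs0 : 0 ≤ (Jstar U q g w).toReal := by
    have := EReal.toReal_le_toReal (hpos w) (by simp) hstar_ne_top
    simpa using this
  have hPw : ePos (Jstar U q g w) = ENNReal.ofReal (Jstar U q g w).toReal := by
    unfold ePos; rw [if_neg hstar_ne_top]
  rw [hPw, ← ENNReal.ofReal_toReal hJM, ← ENNReal.ofReal_toReal hJP,
    ← ENNReal.ofReal_add hs0 ENNReal.toReal_nonneg]
  exact ENNReal.ofReal_le_ofReal (by linarith)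

lemma exists_near (x : S) {δ : ℝ} (hδ : 0 < δ) (hst : Jstar U q g x ≠ ⊤)
    (hsb : Jstar U q g x ≠ ⊥) :
    ∃ π : Policy S C, IsPolicy U π ∧ Jpol q g π x ≤ Jstar U q g x + (δ : EReal) := by
  by_contra hc
  push_neg at hc
  have hge : Jstar U q g x + (δ : EReal) ≤ Jstar U q g x := by
    refine le_iInf₂ fun π' hπ' => ?_
    exact (hc π' hπ').le
  have hlt : Jstar U q g x < Jstar U q g x + (δ : EReal) := by
    rw [← EReal.coe_toReal hst hsb, ← EReal.coe_add, EReal.coe_lt_coe_iff]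
    linarith
  exact absurd hge hlt.not_ge

lemma conserving (hU : ∀ x, (U x).Nonempty) (hg : ∀ x, ∀ u ∈ U x, g x u ≠ ⊥)
    (hGC : GC U q g) (hpos : ∀ x, 0 ≤ Jstar U q g x) (x : S) (δ : ℝ≥0∞)
    (hex : δ = 0 → ∃ π : Policy S C, IsPolicy U π ∧ Jpol q g π x = Jstar U q g x) :
    ∃ u ∈ U x, gPos g x u + ∑' w : S, q x u w * ePos (Jstar U q g w)
      ≤ ePos (Jstar U q g x) + gNeg g x u + δ := by
  rcases eq_or_ne (ePos (Jstar U q g x)) ⊤ with hPx | hPx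
  · obtain ⟨u, hu⟩ := hU x
    exact ⟨u, hu, by rw [hPx]; simp⟩
  rcases eq_or_ne δ ⊤ with hδt | hδt
  · obtain ⟨u, hu⟩ := hU x
    refine ⟨u, hu, ?_⟩
    rw [hδt, add_top]
    exact le_top
  have hst : Jstar U q g x ≠ ⊤ := fun h => hPx (by rw [h]; exact ePos_top)
  have hsb : Jstar U q g x ≠ ⊥ := fun h => by simpa [h] using hpos x
  set d : ℝ := δ.toReal with hd
  have hd0 : 0 ≤ d := ENNReal.toReal_nonneg
  have hδd : ENNReal.ofReal d = δ := ENNReal.ofReal_toReal hδt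
  -- obtain a near-optimal policy
  obtain ⟨π, hπ, hJ⟩ : ∃ π : Policy S C, IsPolicy U π ∧
      Jpol q g π x ≤ Jstar U q g x + (d : EReal) := by
    rcases eq_or_ne δ 0 with hδ0 | hδ0
    · obtain ⟨π, hπ, hJ⟩ := hex hδ0
      refine ⟨π, hπ, ?_⟩
      rw [hJ, ← EReal.coe_toReal hst hsb, ← EReal.coe_add, EReal.coe_le_coe_iff]
      linarith
    · exact exists_near x (ENNReal.toReal_pos hδ0 hδt) hst hsb
  have hJM : Jminus q g π x ≠ ⊤ := Jminus_ne_top hGC hπ x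
  have hsd_ne_top : Jstar U q g x + (d : EReal) ≠ ⊤ := by
    rw [← EReal.coe_toReal hst hsb, ← EReal.coe_add]
    exact EReal.coe_ne_top _
  have hJP : Jplus q g π x ≠ ⊤ := by
    intro h
    rw [Jpol, signedSum, if_pos h] at hJ
    exact hsd_ne_top (top_unique hJ)
  -- key ENNReal inequality
  have hkey : Jplus q g π x ≤ ePos (Jstar U q g x) + δ + Jminus q g π x := by
    rw [Jpol, signedSum, if_neg hJP] at hJ
    rw [ennreal_coe_eq hJP, ennreal_coe_eq hJM, ← EReal.coe_sub,
      ← EReal.coe_toReal hst hsb, ← EReal.coe_add, EReal.coe_le_coe_iff] at hJ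
    have hs0 : 0 ≤ (Jstar U q g x).toReal := by
      have := EReal.toReal_le_toReal (hpos x) (by simp) hst
      simpa using this
    have hPxd : ePos (Jstar U q g x) = ENNReal.ofReal (Jstar U q g x).toReal := by
      unfold ePos; rw [if_neg hst]
    rw [hPxd, ← hδd, ← ENNReal.ofReal_toReal hJM, ← ENNReal.ofReal_toReal hJP,
      ← ENNReal.ofReal_add hs0 hd0, ← ENNReal.ofReal_add (by linarith) ENNReal.toReal_nonneg]
    exact ENNReal.ofReal_le_ofReal (by linarith)
  -- decompositions and the contradiction argument
  set π₀ : C → ℝ≥0∞ := fun u => π [] x u with hπ₀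
  set a : C → ℝ≥0∞ := fun u => gPos g x u
  set b : C → ℝ≥0∞ := fun u => gNeg g x u
  set K : C → ℝ≥0∞ := fun u => ∑' w : S, q x u w * Jminus q g (shift π x u) w with hK
  set L : C → ℝ≥0∞ := fun u => a u + ∑' w : S, q x u w * ePos (Jstar U q g w) with hL
  have hMdec : Jminus q g π x = ∑' u : C, π₀ u * (b u + K u) := Jminus_decomp x
  have hFle : ∑' u : C, π₀ u * (L u + K u) ≤ Jplus q g π x := by
    rw [Jplus_decomp x]
    refine Summable.tsum_le_tsum (fun u => ?_) ENNReal.summable ENNReal.summable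
    refine mul_le_mul_right ?_ _
    rw [hL, add_assoc]
    refine add_le_add_right ?_ _
    calc (∑' w : S, q x u w * ePos (Jstar U q g w)) + K u
        = ∑' w : S, q x u w * (ePos (Jstar U q g w) + Jminus q g (shift π x u) w) := by
          rw [hK, ← ENNReal.tsum_add]
          exact tsum_congr fun w => (mul_add _ _ _).symm
      _ ≤ ∑' w : S, q x u w * Jplus q g (shift π x u) w := by
          refine Summable.tsum_le_tsum (fun w => ?_) ENNReal.summable ENNReal.summable
          exact mul_le_mul_right (Jplus_ge hGC hpos (isPolicy_shift hπ x u) w) _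
  have hπ₀sum : ∑' u : C, π₀ u = 1 := (hπ [] x).1
  have hGsum : ∑' u : C, π₀ u * (ePos (Jstar U q g x) + δ + (b u + K u)) = ePos (Jstar U q g x) + δ + Jminus q g π x := by
    calc ∑' u : C, π₀ u * (ePos (Jstar U q g x) + δ + (b u + K u))
        = ∑' u : C, (π₀ u * (ePos (Jstar U q g x) + δ) + π₀ u * (b u + K u)) :=
          tsum_congr fun u => mul_add _ _ _
      _ = (∑' u : C, π₀ u * (ePos (Jstar U q g x) + δ)) + ∑' u : C, π₀ u * (b u + K u) := ENNReal.tsum_add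
      _ = (ePos (Jstar U q g x) + δ) * 1 + Jminus q g π x := by rw [ENNReal.tsum_mul_right, hπ₀sum, hMdec]; ring
      _ = ePos (Jstar U q g x) + δ + Jminus q g π x := by rw [mul_one]
  have hGne : ∑' u : C, π₀ u * (ePos (Jstar U q g x) + δ + (b u + K u)) ≠ ⊤ := by
    rw [hGsum]
    exact ENNReal.add_ne_top.mpr ⟨ENNReal.add_ne_top.mpr ⟨hPx, hδt⟩, hJM⟩
  by_contra hcon
  push_neg at hcon
  -- pick a control in the support of π₀
  have hexu : ∃ u : C, π₀ u ≠ 0 := by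
    by_contra h0
    push_neg at h0
    rw [ENNReal.tsum_eq_zero.mpr h0] at hπ₀sum
    exact zero_ne_one hπ₀sum
  obtain ⟨u₀, hu₀⟩ := hexu
  have hmem : ∀ u : C, π₀ u ≠ 0 → u ∈ U x := fun u h => (hπ [] x).2 u h
  have hKne : ∀ u : C, π₀ u ≠ 0 → K u ≠ ⊤ := by
    intro u hu hKt
    apply hJM
    refine top_unique ?_
    calc (⊤ : ℝ≥0∞) = π₀ u * (b u + K u) := by rw [hKt, add_top, ENNReal.mul_top hu]
      _ ≤ ∑' u' : C, π₀ u' * (b u' + K u') := ENNReal.le_tsum u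
      _ = Jminus q g π x := hMdec.symm
  have hGF : ∀ u : C, π₀ u * (ePos (Jstar U q g x) + δ + (b u + K u)) ≤ π₀ u * (L u + K u) := by
    intro u
    rcases eq_or_ne (π₀ u) 0 with h0 | h0
    · rw [h0, zero_mul, zero_mul]
    refine mul_le_mul_right ?_ _
    have hlt := hcon u (hmem u h0)
    calc ePos (Jstar U q g x) + δ + (b u + K u) = (ePos (Jstar U q g x) + b u + δ) + K u := by ring
      _ ≤ L u + K u := add_le_add_left hlt.le _
  have hGFlt : π₀ u₀ * (ePos (Jstar U q g x) + δ + (b u₀ + K u₀)) < π₀ u₀ * (L u₀ + K u₀) := by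
    have hπt : π₀ u₀ ≠ ⊤ := by
      intro ht
      have : (⊤:ℝ≥0∞) ≤ 1 := by
        rw [← hπ₀sum, ← ht]
        exact ENNReal.le_tsum u₀
      simp at this
    rw [ENNReal.mul_lt_mul_iff_right hu₀ hπt]
    have hlt := hcon u₀ (hmem u₀ hu₀)
    calc ePos (Jstar U q g x) + δ + (b u₀ + K u₀) = (ePos (Jstar U q g x) + b u₀ + δ) + K u₀ := by ring
      _ < L u₀ + K u₀ := ENNReal.add_lt_add_right (hKne u₀ hu₀) hlt
  have : ∑' u : C, π₀ u * (ePos (Jstar U q g x) + δ + (b u + K u)) < ∑' u : C, π₀ u * (L u + K u) :=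
    ENNReal.tsum_lt_tsum hGne hGF hGFlt
  have hle2 : ∑' u : C, π₀ u * (L u + K u) ≤ ∑' u : C, π₀ u * (ePos (Jstar U q g x) + δ + (b u + K u)) := by
    rw [hGsum]
    exact hFle.trans hkey
  exact absurd hle2 this.not_ge

end Jlemmas


section Markov

variable {S C : Type}
variable {U : S → Set C} {q : S → C → S → ℝ≥0∞} {g : S → C → EReal}

/-- The nonrandomized Markov policy determined by a sequence of decision rules. -/
def mpol (f : ℕ → S → C) : Policy S C := fun h y v => if v = f h.length y then 1 else 0

lemma mpol_isPolicy (f : ℕ → S → C) (hf : ∀ k x, f k x ∈ U x) : IsPolicy U (mpol f) := by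
  intro h x
  refine ⟨tsum_ite_eq (f h.length x) 1, fun u hu => ?_⟩
  rcases eq_or_ne u (f h.length x) with rfl | hne
  · exact hf _ x
  · exact absurd (if_neg hne) hu

lemma mpol_nonrandomized (f : ℕ → S → C) : Nonrandomized (mpol (S := S) (C := C) f) :=
  fun h x => ⟨f h.length x, fun _ => rfl⟩

lemma mpol_isMarkov (f : ℕ → S → C) : IsMarkov (mpol (S := S) (C := C) f) := by
  intro h h' x hlen
  unfold mpol
  rw [hlen]

lemma mpol_saDist (f : ℕ → S → C) (x : S) (n : ℕ) (z : S) (u : C) :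
    saDist q (mpol f) x n z u
      = if u = f n z then sDist q (mpol f) x n z else 0 := by
  unfold saDist sDist
  have hterm : ∀ h : {l : List (S × C) // l.length = n},
      mpol f h.1 z u = if u = f n z then 1 else 0 := by
    intro h; unfold mpol; rw [h.2]
  rcases eq_or_ne u (f n z) with hu | hu
  · rw [if_pos hu]
    refine tsum_congr fun h => ?_
    rw [hterm h, if_pos hu, mul_one]
  · rw [if_neg hu]
    refine ENNReal.tsum_eq_zero.mpr fun h => ?_
    rw [hterm h, if_neg hu, mul_zero]

lemma mpol_costAt (f : ℕ → S → C) (x : S) (n : ℕ) (c : S → C → ℝ≥0∞) :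
    costAt q (mpol f) x n c = ∑' z : S, sDist q (mpol f) x n z * c z (f n z) := by
  unfold costAt
  refine tsum_congr fun z => ?_
  rw [tsum_eq_single (f n z)]
  · rw [mpol_saDist, if_pos rfl]
  · intro u hu
    rw [mpol_saDist, if_neg hu, zero_mul]

lemma mpol_sDist_succ (f : ℕ → S → C) (x : S) (n : ℕ) (y : S) :
    sDist q (mpol f) x (n + 1) y
      = ∑' z : S, sDist q (mpol f) x n z * q z (f n z) y := by
  rw [sDist_succ, ENNReal.tsum_prod']
  refine tsum_congr fun z => ?_
  rw [tsum_eq_single (f n z)]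
  · rw [mpol_saDist, if_pos rfl]
  · intro u hu
    rw [mpol_saDist, if_neg hu, zero_mul]

lemma sDist_zero_tsum (π : Policy S C) (x : S) (P : S → ℝ≥0∞) :
    ∑' y : S, sDist q π x 0 y * P y = P x := by
  rw [tsum_eq_single x]
  · rw [sDist_zero, if_pos rfl, one_mul]
  · intro y hy
    rw [sDist_zero, if_neg hy, zero_mul]

lemma mpol_bound (hq : ∀ x, ∀ u ∈ U x, (∑' x' : S, q x u x') = 1)
    (f : ℕ → S → C) (hf : ∀ k x, f k x ∈ U x) (δ : ℕ → ℝ≥0∞)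
    (hcons : ∀ k z, gPos g z (f k z) + ∑' w : S, q z (f k z) w * ePos (Jstar U q g w)
        ≤ ePos (Jstar U q g z) + gNeg g z (f k z) + δ k) (x : S) :
    ∀ N : ℕ, (∑ k ∈ Finset.range N, costAt q (mpol f) x k (gPos g))
        + ∑' y : S, sDist q (mpol f) x N y * ePos (Jstar U q g y)
      ≤ ePos (Jstar U q g x) + (∑ k ∈ Finset.range N, costAt q (mpol f) x k (gNeg g))
        + ∑ k ∈ Finset.range N, δ k := by
  have hpol : IsPolicy U (mpol (S := S) (C := C) f) := mpol_isPolicy f hf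
  intro N
  induction N with
  | zero =>
      simp only [Finset.range_zero, Finset.sum_empty, zero_add, add_zero]
      rw [sDist_zero_tsum]
  | succ N ih =>
      have hM : ∑' y : S, sDist q (mpol f) x (N + 1) y * ePos (Jstar U q g y)
          = ∑' z : S, sDist q (mpol f) x N z *
              ∑' w : S, q z (f N z) w * ePos (Jstar U q g w) := by
        calc ∑' y : S, sDist q (mpol f) x (N + 1) y * ePos (Jstar U q g y)
            = ∑' y : S, ∑' z : S, sDist q (mpol f) x N z * q z (f N z) y *
                ePos (Jstar U q g y) := by
              refine tsum_congr fun y => ?_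
              rw [mpol_sDist_succ, ← ENNReal.tsum_mul_right]
          _ = ∑' z : S, ∑' y : S, sDist q (mpol f) x N z * q z (f N z) y *
                ePos (Jstar U q g y) := ENNReal.tsum_comm
          _ = ∑' z : S, sDist q (mpol f) x N z *
                ∑' w : S, q z (f N z) w * ePos (Jstar U q g w) := by
              refine tsum_congr fun z => ?_
              rw [← ENNReal.tsum_mul_left]
              exact tsum_congr fun w => by ring
      have hstep : costAt q (mpol f) x N (gPos g)
            + ∑' y : S, sDist q (mpol f) x (N + 1) y * ePos (Jstar U q g y)
          ≤ (∑' y : S, sDist q (mpol f) x N y * ePos (Jstar U q g y))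
            + costAt q (mpol f) x N (gNeg g) + δ N := by
        calc costAt q (mpol f) x N (gPos g)
              + ∑' y : S, sDist q (mpol f) x (N + 1) y * ePos (Jstar U q g y)
            = ∑' z : S, sDist q (mpol f) x N z *
                (gPos g z (f N z) + ∑' w : S, q z (f N z) w * ePos (Jstar U q g w)) := by
              rw [mpol_costAt, hM, ← ENNReal.tsum_add]
              exact tsum_congr fun z => (mul_add _ _ _).symm
          _ ≤ ∑' z : S, sDist q (mpol f) x N z *
                (ePos (Jstar U q g z) + gNeg g z (f N z) + δ N) := by
              refine Summable.tsum_le_tsum (fun z => ?_) ENNReal.summable ENNReal.summable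
              exact mul_le_mul_right (hcons N z) _
          _ = (∑' z : S, sDist q (mpol f) x N z *
                  (ePos (Jstar U q g z) + gNeg g z (f N z)))
                + ∑' z : S, sDist q (mpol f) x N z * δ N := by
              rw [← ENNReal.tsum_add]
              exact tsum_congr fun z => mul_add _ _ _
          _ ≤ (∑' z : S, sDist q (mpol f) x N z *
                  (ePos (Jstar U q g z) + gNeg g z (f N z))) + δ N := by
              refine add_le_add_right ?_ _
              rw [ENNReal.tsum_mul_right]
              calc (∑' z : S, sDist q (mpol f) x N z) * δ N
                  ≤ 1 * δ N := mul_le_mul_left (sDist_mass_le hq hpol x N) _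
                _ = δ N := one_mul _
          _ = (∑' y : S, sDist q (mpol f) x N y * ePos (Jstar U q g y))
                + costAt q (mpol f) x N (gNeg g) + δ N := by
              rw [mpol_costAt]
              congr 1
              rw [← ENNReal.tsum_add]
              exact tsum_congr fun z => mul_add _ _ _
      calc (∑ k ∈ Finset.range (N + 1), costAt q (mpol f) x k (gPos g))
            + ∑' y : S, sDist q (mpol f) x (N + 1) y * ePos (Jstar U q g y)
          = (∑ k ∈ Finset.range N, costAt q (mpol f) x k (gPos g))
              + (costAt q (mpol f) x N (gPos g)
                + ∑' y : S, sDist q (mpol f) x (N + 1) y * ePos (Jstar U q g y)) := by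
            rw [Finset.sum_range_succ]; ring
        _ ≤ (∑ k ∈ Finset.range N, costAt q (mpol f) x k (gPos g))
              + ((∑' y : S, sDist q (mpol f) x N y * ePos (Jstar U q g y))
                + costAt q (mpol f) x N (gNeg g) + δ N) := add_le_add_right hstep _
        _ = ((∑ k ∈ Finset.range N, costAt q (mpol f) x k (gPos g))
              + ∑' y : S, sDist q (mpol f) x N y * ePos (Jstar U q g y))
              + costAt q (mpol f) x N (gNeg g) + δ N := by ring
        _ ≤ (ePos (Jstar U q g x) + (∑ k ∈ Finset.range N, costAt q (mpol f) x k (gNeg g))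
              + ∑ k ∈ Finset.range N, δ k)
              + costAt q (mpol f) x N (gNeg g) + δ N := by
            exact add_le_add_left (add_le_add_left ih _) _
        _ = ePos (Jstar U q g x) + (∑ k ∈ Finset.range (N + 1), costAt q (mpol f) x k (gNeg g))
              + ∑ k ∈ Finset.range (N + 1), δ k := by
            rw [Finset.sum_range_succ, Finset.sum_range_succ]; ring

lemma mpol_Jpol_le (hg : ∀ x, ∀ u ∈ U x, g x u ≠ ⊥)
    (hq : ∀ x, ∀ u ∈ U x, (∑' x' : S, q x u x') = 1)
    (hGC : GC U q g) (hpos : ∀ x, 0 ≤ Jstar U q g x)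
    (f : ℕ → S → C) (hf : ∀ k x, f k x ∈ U x) (δ : ℕ → ℝ≥0∞)
    (hcons : ∀ k z, gPos g z (f k z) + ∑' w : S, q z (f k z) w * ePos (Jstar U q g w)
        ≤ ePos (Jstar U q g z) + gNeg g z (f k z) + δ k)
    {E : ℝ≥0∞} (hE : ∑' k : ℕ, δ k = E) (hEt : E ≠ ⊤) (x : S) :
    Jpol q g (mpol f) x ≤ Jstar U q g x + ((E.toReal : ℝ) : EReal) := by
  have hpol : IsPolicy U (mpol (S := S) (C := C) f) := mpol_isPolicy f hf
  rcases eq_or_ne (Jstar U q g x) ⊤ with hst | hst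
  · rw [hst, EReal.top_add_of_ne_bot (EReal.coe_ne_bot _)]
    exact le_top
  have hsb : Jstar U q g x ≠ ⊥ := fun h => by simpa [h] using hpos x
  have hPx : ePos (Jstar U q g x) ≠ ⊤ := fun h => hst (ePos_eq_top_iff.mp h)
  have hJM : Jminus q g (mpol f) x ≠ ⊤ := Jminus_ne_top hGC hpol x
  -- the ENNReal bound
  have hkey : Jplus q g (mpol f) x
      ≤ ePos (Jstar U q g x) + Jminus q g (mpol f) x + E := by
    rw [Jplus, ENNReal.tsum_eq_iSup_nat]
    refine iSup_le fun N => ?_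
    have h1 := mpol_bound hq f hf δ hcons x N
    have h2 : (∑ k ∈ Finset.range N, costAt q (mpol f) x k (gPos g))
        ≤ (∑ k ∈ Finset.range N, costAt q (mpol f) x k (gPos g))
          + ∑' y : S, sDist q (mpol f) x N y * ePos (Jstar U q g y) := le_add_right le_rfl
    refine (h2.trans h1).trans ?_
    refine add_le_add (add_le_add_right ?_ _) ?_
    · exact Summable.sum_le_tsum _ (fun _ _ => zero_le) ENNReal.summable
    · rw [← hE]
      exact Summable.sum_le_tsum _ (fun _ _ => zero_le) ENNReal.summable
  have hJP : Jplus q g (mpol f) x ≠ ⊤ := by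
    intro h
    rw [h] at hkey
    exact (ENNReal.add_ne_top.mpr ⟨ENNReal.add_ne_top.mpr ⟨hPx, hJM⟩, hEt⟩) (top_unique hkey)
  -- convert to EReal
  rw [Jpol, signedSum, if_neg hJP]
  set s : ℝ := (Jstar U q g x).toReal with hs
  have hs0 : 0 ≤ s := by
    have := EReal.toReal_le_toReal (hpos x) (by simp) hst
    simpa using this
  have hPxr : (ePos (Jstar U q g x)).toReal = s := by
    unfold ePos
    rw [if_neg hst, ENNReal.toReal_ofReal hs0]
  have hreal : (Jplus q g (mpol f) x).toReal
      ≤ s + (Jminus q g (mpol f) x).toReal + E.toReal := by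
    have h1 := (ENNReal.toReal_le_toReal hJP
      (ENNReal.add_ne_top.mpr ⟨ENNReal.add_ne_top.mpr ⟨hPx, hJM⟩, hEt⟩)).mpr hkey
    rwa [ENNReal.toReal_add (ENNReal.add_ne_top.mpr ⟨hPx, hJM⟩) hEt,
      ENNReal.toReal_add hPx hJM, hPxr] at h1
  rw [ennreal_coe_eq hJP, ennreal_coe_eq hJM, ← EReal.coe_sub,
    ← EReal.coe_toReal hst hsb, ← hs, ← EReal.coe_add, EReal.coe_le_coe_iff]
  linarith

end Markov

/-- if `J* ≥ 0`, then `ε`-optimal nonrandomized Markov policies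
exist; and if moreover every state admits an optimal policy, then a
nonrandomized stationary optimal policy exists. -/
theorem exists_eps_optimal_markov_and_optimal_stationary {S C : Type} [Countable S] [Countable C]
    (U : S → Set C) (q : S → C → S → ℝ≥0∞) (g : S → C → EReal)
    (hU : ∀ x, (U x).Nonempty)
    (hg : ∀ x, ∀ u ∈ U x, g x u ≠ ⊥)
    (hq : ∀ x, ∀ u ∈ U x, (∑' x' : S, q x u x') = 1)
    (hGC : GC U q g)
    (hpos : ∀ x : S, 0 ≤ Jstar U q g x) :
    (∀ ε : ℝ, 0 < ε → ∃ π : Policy S C, IsPolicy U π ∧ Nonrandomized π ∧ IsMarkov π ∧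
      ∀ x : S, Jpol q g π x ≤ Jstar U q g x + (ε : EReal)) ∧
    ((∀ x : S, ∃ π : Policy S C, IsPolicy U π ∧ Jpol q g π x = Jstar U q g x) →
      ∃ μ : S → C → ℝ≥0∞, IsPolicy U (toPolicy μ) ∧ Nonrandomized (toPolicy μ) ∧
        ∀ x : S, Jpol q g (toPolicy μ) x = Jstar U q g x) := by
  constructor
  · -- ε-optimal nonrandomized Markov policies
    intro ε hε
    set δ : ℕ → ℝ≥0∞ := fun k => ENNReal.ofReal ε * (2 : ℝ≥0∞)⁻¹ ^ (k + 1) with hδ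
    have hδ0 : ∀ k, δ k ≠ 0 := by
      intro k
      refine mul_ne_zero ?_ (pow_ne_zero _ ?_)
      · simpa [ENNReal.ofReal_eq_zero] using hε.not_ge
      · exact ENNReal.inv_ne_zero.mpr ENNReal.ofNat_ne_top
    have hch : ∀ (k : ℕ) (z : S), ∃ u ∈ U z,
        gPos g z u + ∑' w : S, q z u w * ePos (Jstar U q g w)
          ≤ ePos (Jstar U q g z) + gNeg g z u + δ k :=
      fun k z => conserving hU hg hGC hpos z (δ k) (fun h0 => absurd h0 (hδ0 k))
    choose f hfU hfB using hch
    have hgeo : ∑' k : ℕ, (2 : ℝ≥0∞)⁻¹ ^ (k + 1) = 1 := by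
      calc ∑' k : ℕ, (2 : ℝ≥0∞)⁻¹ ^ (k + 1)
          = ∑' k : ℕ, (2 : ℝ≥0∞)⁻¹ ^ k * 2⁻¹ := tsum_congr fun k => pow_succ _ _
        _ = (∑' k : ℕ, (2 : ℝ≥0∞)⁻¹ ^ k) * 2⁻¹ := ENNReal.tsum_mul_right
        _ = (1 - 2⁻¹)⁻¹ * 2⁻¹ := by rw [ENNReal.tsum_geometric]
        _ = 1 := by
            rw [ENNReal.one_sub_inv_two, inv_inv]
            exact ENNReal.mul_inv_cancel two_ne_zero ENNReal.ofNat_ne_top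
    have hEsum : ∑' k : ℕ, δ k = ENNReal.ofReal ε := by
      rw [hδ]
      rw [ENNReal.tsum_mul_left, hgeo, mul_one]
    refine ⟨mpol f, mpol_isPolicy f hfU, mpol_nonrandomized f, mpol_isMarkov f, fun x => ?_⟩
    have hfin := mpol_Jpol_le hg hq hGC hpos f hfU δ hfB hEsum ENNReal.ofReal_ne_top x
    rwa [ENNReal.toReal_ofReal hε.le] at hfin
  · -- optimal stationary policy
    intro hopt
    choose μsel hμU hμB using fun z : S =>
      conserving hU hg hGC hpos z 0 (fun _ => hopt z)
    set μ : S → C → ℝ≥0∞ := fun x u => if u = μsel x then 1 else 0 with hμ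
    have hpoleq : toPolicy μ = mpol (fun _ => μsel) := rfl
    refine ⟨μ, ?_, ?_, ?_⟩
    · rw [hpoleq]; exact mpol_isPolicy _ (fun _ z => hμU z)
    · rw [hpoleq]; exact mpol_nonrandomized _
    · intro x
      refine le_antisymm ?_ ?_
      · have hfin := mpol_Jpol_le hg hq hGC hpos (fun _ => μsel) (fun _ z => hμU z)
          (fun _ => 0) (fun _ z => hμB z) (E := 0) (by simp) (by simp) x
        rw [hpoleq]
        simpa using hfin
      · rw [hpoleq]
        exact Jstar_le_Jpol (mpol_isPolicy _ (fun _ z => hμU z)) x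

end GCMDP

end
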